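/- Suppose f : [0,∞) → ℝ is continuous and lim_{x→∞} x f(x) = a ≠ 0. Then lim_{x→∞} (x / log x) · ℱ[f](x) = a, where ℱ[f](x) = ∫_0^{π/2} f(x sin θ) dθ. -/

import Mathlib

open MeasureTheory Filter


open Real

lemma aux_deriv {t : ℝ} (ht : 0 < t) (ht' : t ≤ Real.pi/2) :
    HasDerivAt (fun θ => Real.log (Real.sin (θ/2)) - Real.log (Real.cos (θ/2)))
      (1 / Real.sin t) t := by
  have hπ := Real.pi_pos
  have hs : 0 < Real.sin (t/2) := Real.sin_pos_of_pos_of_lt_pi (by linarith) (by linarith)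
  have hc : 0 < Real.cos (t/2) := Real.cos_pos_of_mem_Ioo ⟨by linarith, by linarith⟩
  have h1 : HasDerivAt (fun θ : ℝ => θ/2) (1/2) t := by
    simpa using (hasDerivAt_id t).div_const 2
  have hsin : HasDerivAt (fun θ : ℝ => Real.sin (θ/2)) (Real.cos (t/2) * (1/2)) t :=
    by have := (Real.hasDerivAt_sin (t/2)).comp t h1; exact this
  have hcos : HasDerivAt (fun θ : ℝ => Real.cos (θ/2)) (-Real.sin (t/2) * (1/2)) t :=
    by have := (Real.hasDerivAt_cos (t/2)).comp t h1; exact this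
  have hls : HasDerivAt (fun θ : ℝ => Real.log (Real.sin (θ/2)))
      ((Real.sin (t/2))⁻¹ * (Real.cos (t/2) * (1/2))) t :=
    by have := (Real.hasDerivAt_log hs.ne').comp t hsin; exact this
  have hlc : HasDerivAt (fun θ : ℝ => Real.log (Real.cos (θ/2)))
      ((Real.cos (t/2))⁻¹ * (-Real.sin (t/2) * (1/2))) t :=
    by have := (Real.hasDerivAt_log hc.ne').comp t hcos; exact this
  have htot := hls.sub hlc
  have hsint : Real.sin t = 2 * Real.sin (t/2) * Real.cos (t/2) := by
    rw [← Real.sin_two_mul]; ring_nf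
  refine htot.congr_deriv ?_; rw [eq_comm]
  have hsq := Real.sin_sq_add_cos_sq (t/2)
  rw [hsint]
  field_simp
  linear_combination (-1:ℝ)*hsq

lemma aux_int {u : ℝ} (hu : 0 < u) (hu' : u ≤ Real.pi/2) :
    ∫ θ in u..(Real.pi/2), 1/Real.sin θ
      = Real.log (Real.cos (u/2)) - Real.log (Real.sin (u/2)) := by
  have hπ := Real.pi_pos
  have h := intervalIntegral.integral_eq_sub_of_hasDerivAt
    (f := fun θ => Real.log (Real.sin (θ/2)) - Real.log (Real.cos (θ/2)))
    (f' := fun θ => 1/Real.sin θ) (a := u) (b := Real.pi/2)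
    (fun t ht => by
      rw [Set.uIcc_of_le hu'] at ht
      exact aux_deriv (lt_of_lt_of_le hu ht.1) ht.2)
    (by
      apply ContinuousOn.intervalIntegrable
      rw [Set.uIcc_of_le hu']
      apply continuousOn_const.div Real.continuous_sin.continuousOn
      intro t ht
      exact (Real.sin_pos_of_pos_of_lt_pi (lt_of_lt_of_le hu ht.1) (by linarith [ht.2])).ne')
  rw [h]
  simp only [show Real.pi/2/2 = Real.pi/4 from by ring, Real.sin_pi_div_four,
    Real.cos_pi_div_four]
  ring



/-- If `lim_{x→∞} x f(x) = a ≠ 0` then `lim_{x→∞} (x/log x) ℱ[f](x) = a`. -/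
theorem stmt_9 (f : ℝ → ℝ) (hf : ContinuousOn f (Set.Ici 0))
    (a : ℝ) (ha : a ≠ 0)
    (hquant : Tendsto (fun x : ℝ => x * f x) atTop (nhds a)) :
    Tendsto (fun x : ℝ => (x / Real.log x) *
        ∫ θ in (0:ℝ)..(Real.pi/2), f (x * Real.sin θ))
      atTop (nhds a) := by
  have hπ := Real.pi_pos
  rw [Metric.tendsto_atTop]
  intro ε' hε'
  set ε := ε'/4 with hεdef
  clear_value ε
  have hε : 0 < ε := by rw [hεdef]; positivity
  obtain ⟨T₀, hT₀⟩ := (Metric.tendsto_atTop.mp hquant) ε hε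
  set T := max T₀ 1 with hTdef
  clear_value T
  have hT1 : (1:ℝ) ≤ T := by rw [hTdef]; exact le_max_right _ _
  have hT0 : (0:ℝ) < T := lt_of_lt_of_le one_pos hT1
  have hTbig : ∀ y : ℝ, T ≤ y → |y * f y - a| < ε := by
    intro y hy
    have hT₀T : T₀ ≤ T := by rw [hTdef]; exact le_max_left _ _
    have := hT₀ y (le_trans hT₀T hy)
    rwa [Real.dist_eq] at this
  obtain ⟨C, hC⟩ := isCompact_Icc.exists_bound_of_continuousOn
    (hf.mono (Set.Icc_subset_Ici_self (a := T) (b := 0)))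
  have hC0 : 0 ≤ C := le_trans (norm_nonneg _) (hC 0 ⟨le_refl _, hT0.le⟩)
  set D₁ := Real.log 2 + |Real.log T| with hD₁def
  clear_value D₁
  have hD₁ : 0 ≤ D₁ := by
    rw [hD₁def]; exact add_nonneg (Real.log_nonneg one_le_two) (abs_nonneg _)
  set D := C * (Real.pi/2) * T + |a| * D₁ with hDdef
  clear_value D
  have hD0 : 0 ≤ D := by
    rw [hDdef]
    exact add_nonneg (mul_nonneg (mul_nonneg hC0 (by positivity)) hT0.le)
      (mul_nonneg (abs_nonneg a) hD₁)
  refine ⟨max (T+1) (Real.exp (max (max 1 D₁) (2*(D+1)/ε'))), fun x hx => ?_⟩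
  have hxT : T + 1 ≤ x := le_trans (le_max_left _ _) hx
  have hxpos : 0 < x := by linarith
  set L := Real.log x with hLdef
  clear_value L
  have hLbig : max (max 1 D₁) (2*(D+1)/ε') ≤ L := by
    rw [hLdef, Real.le_log_iff_exp_le hxpos]
    exact le_trans (le_max_right _ _) hx
  have hL1 : (1:ℝ) ≤ L := le_trans (le_trans (le_max_left _ _) (le_max_left _ _)) hLbig
  have hL0 : (0:ℝ) < L := by linarith
  have hLD₁ : D₁ ≤ L := le_trans (le_trans (le_max_right _ _) (le_max_left _ _)) hLbig
  have hLε : 2*(D+1) ≤ L * ε' := by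
    have := le_trans (le_max_right _ _) hLbig
    rwa [div_le_iff₀ hε'] at this
  -- the cut point
  set θ₀ := Real.arcsin (T/x) with hθ₀def
  clear_value θ₀
  have hTx0 : 0 < T/x := div_pos hT0 hxpos
  have hTx1 : T/x ≤ 1 := by
    rw [div_le_one hxpos]; linarith
  have hθ₀pos : 0 < θ₀ := by rw [hθ₀def]; exact Real.arcsin_pos.2 hTx0
  have hθ₀le : θ₀ ≤ Real.pi/2 := by rw [hθ₀def]; exact Real.arcsin_le_pi_div_two _
  have hsinθ₀ : Real.sin θ₀ = T/x := by
    rw [hθ₀def]; exact Real.sin_arcsin (by linarith) hTx1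
  have hθ₀bound : θ₀ ≤ Real.pi/2 * (T/x) := by
    have h := Real.mul_le_sin hθ₀pos.le hθ₀le
    rw [hsinθ₀] at h
    calc θ₀ = Real.pi/2 * (2/Real.pi * θ₀) := by field_simp
      _ ≤ Real.pi/2 * (T/x) := by
          apply mul_le_mul_of_nonneg_left h (by positivity)
  -- continuity and integrability
  have hFcont : ContinuousOn (fun θ => f (x * Real.sin θ)) (Set.Icc 0 (Real.pi/2)) := by
    apply hf.comp ((continuous_const.mul Real.continuous_sin).continuousOn)
    intro θ hθ
    exact mul_nonneg hxpos.le
      (Real.sin_nonneg_of_nonneg_of_le_pi hθ.1 (le_trans hθ.2 (by linarith)))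
  have hsub1 : Set.uIcc (0:ℝ) θ₀ ⊆ Set.Icc 0 (Real.pi/2) := by
    rw [Set.uIcc_of_le hθ₀pos.le]
    exact Set.Icc_subset_Icc_right hθ₀le
  have hsub2 : Set.uIcc θ₀ (Real.pi/2) ⊆ Set.Icc 0 (Real.pi/2) := by
    rw [Set.uIcc_of_le hθ₀le]
    exact Set.Icc_subset_Icc_left hθ₀pos.le
  have hint1 : IntervalIntegrable (fun θ => f (x * Real.sin θ)) volume 0 θ₀ :=
    (hFcont.mono hsub1).intervalIntegrable
  have hint2 : IntervalIntegrable (fun θ => f (x * Real.sin θ)) volume θ₀ (Real.pi/2) :=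
    (hFcont.mono hsub2).intervalIntegrable
  have hsinpos : ∀ t ∈ Set.Icc θ₀ (Real.pi/2), 0 < Real.sin t := by
    intro t ht
    exact Real.sin_pos_of_pos_of_lt_pi (lt_of_lt_of_le hθ₀pos ht.1) (by linarith [ht.2])
  have hinvcont : ContinuousOn (fun θ => 1/(x * Real.sin θ)) (Set.Icc θ₀ (Real.pi/2)) := by
    apply continuousOn_const.div ((continuous_const.mul Real.continuous_sin).continuousOn)
    intro t ht
    exact (mul_pos hxpos (hsinpos t ht)).ne'
  have hintinv : IntervalIntegrable (fun θ => 1/(x * Real.sin θ)) volume θ₀ (Real.pi/2) := by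
    apply ContinuousOn.intervalIntegrable
    rwa [Set.uIcc_of_le hθ₀le]
  -- value of the comparison integral
  set c := Real.cos (θ₀/2) with hcdef
  clear_value c
  set s := Real.sin (θ₀/2) with hsdef
  clear_value s
  have hs0 : 0 < s := by
    rw [hsdef]; exact Real.sin_pos_of_pos_of_lt_pi (by linarith) (by linarith)
  have hc0 : 0 < c := by
    rw [hcdef]; exact Real.cos_pos_of_mem_Ioo ⟨by linarith, by linarith⟩
  set S := Real.log c - Real.log s with hSdef
  clear_value S
  have hS : ∫ θ in θ₀..(Real.pi/2), 1/Real.sin θ = S := by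
    rw [hSdef, hcdef, hsdef]; exact aux_int hθ₀pos hθ₀le
  have hsc : 2 * s * c = T/x := by
    rw [← hsinθ₀, hsdef, hcdef, ← Real.sin_two_mul]; ring_nf
  have hSval : S = L + (Real.log (2*c^2) - Real.log T) := by
    have hsc' : 2*s*c*x = T := by
      rw [eq_div_iff hxpos.ne'] at hsc
      exact hsc
    have hcs : c / s = 2*c^2*x/T := by
      rw [div_eq_div_iff hs0.ne' hT0.ne']
      linear_combination (-c) * hsc'
    have : Real.log (c/s) = Real.log (2*c^2*x/T) := by rw [hcs]
    rw [Real.log_div hc0.ne' hs0.ne'] at this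
    rw [Real.log_div (by positivity) hT0.ne', Real.log_mul (by positivity) hxpos.ne'] at this
    rw [hSdef, this, hLdef]; ring
  have hc2lb : (1:ℝ) ≤ 2*c^2 := by
    have : Real.cos (Real.pi/4) ≤ c := by
      rw [hcdef]
      apply Real.cos_le_cos_of_nonneg_of_le_pi (by linarith) (by linarith) (by linarith)
    rw [Real.cos_pi_div_four] at this
    have h2 : (Real.sqrt 2 / 2)^2 ≤ c^2 := by
      apply pow_le_pow_left₀ (by positivity) this
    rw [div_pow, Real.sq_sqrt (by norm_num : (0:ℝ) ≤ 2)] at h2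
    norm_num at h2
    linarith only [h2]
  have hc2ub : 2*c^2 ≤ 2 := by
    have := Real.cos_sq_le_one (θ₀/2)
    rw [← hcdef] at this
    linarith only [this]
  have hSL : |S - L| ≤ D₁ := by
    rw [hSval]
    have h1 : 0 ≤ Real.log (2*c^2) := Real.log_nonneg hc2lb
    have h2 : Real.log (2*c^2) ≤ Real.log 2 := by
      apply Real.log_le_log (by positivity) hc2ub
    have h3 : |Real.log (2*c^2) - Real.log T| ≤ Real.log 2 + |Real.log T| := by
      calc |Real.log (2*c^2) - Real.log T| ≤ |Real.log (2*c^2)| + |Real.log T| :=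
            abs_sub _ _
        _ ≤ Real.log 2 + |Real.log T| := by
            rw [abs_of_nonneg h1]; linarith
    rw [hD₁def]
    simpa using h3
  have hS0 : 0 ≤ S := by
    have := abs_le.mp hSL
    linarith [this.1]
  -- J
  have hJ : ∫ θ in θ₀..(Real.pi/2), 1/(x*Real.sin θ) = S/x := by
    have heq : (fun θ => 1/(x*Real.sin θ)) = (fun θ => (1/x) * (1/Real.sin θ)) := by
      funext θ; rw [one_div, mul_inv]; ring
    rw [heq, intervalIntegral.integral_const_mul, hS]; ring
  -- I₁ bound
  have hI₁ : ‖∫ θ in (0:ℝ)..θ₀, f (x * Real.sin θ)‖ ≤ C * θ₀ := by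
    have h := intervalIntegral.norm_integral_le_of_norm_le_const
      (C := C) (f := fun θ => f (x * Real.sin θ)) (a := 0) (b := θ₀) ?_
    · rwa [sub_zero, abs_of_nonneg hθ₀pos.le] at h
    · intro t ht
      rw [Set.uIoc_of_le hθ₀pos.le] at ht
      apply hC
      constructor
      · exact mul_nonneg hxpos.le
          (Real.sin_nonneg_of_nonneg_of_le_pi ht.1.le (by linarith [ht.2, hθ₀le]))
      · have hst : Real.sin t ≤ Real.sin θ₀ := by
          apply Real.strictMonoOn_sin.monotoneOn ⟨by linarith [ht.1], by linarith [ht.2, hθ₀le]⟩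
            ⟨by linarith, hθ₀le⟩ ht.2
        rw [hsinθ₀] at hst
        calc x * Real.sin t ≤ x * (T/x) := by
              apply mul_le_mul_of_nonneg_left hst hxpos.le
          _ = T := by field_simp
  -- I₂ error bound
  have haint : IntervalIntegrable (fun θ => a * (1/(x*Real.sin θ))) volume θ₀ (Real.pi/2) :=
    hintinv.const_mul a
  have hεint : IntervalIntegrable (fun θ => ε * (1/(x*Real.sin θ))) volume θ₀ (Real.pi/2) :=
    hintinv.const_mul ε
  have hE : ‖∫ θ in θ₀..(Real.pi/2),
      (f (x * Real.sin θ) - a * (1/(x*Real.sin θ)))‖ ≤ ε * (S/x) := by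
    have hb : ∀ t ∈ Set.uIoc θ₀ (Real.pi/2),
        ‖f (x * Real.sin t) - a * (1/(x*Real.sin t))‖ ≤ ε * (1/(x*Real.sin t)) := by
      intro t ht
      rw [Set.uIoc_of_le hθ₀le] at ht
      have hstpos : 0 < Real.sin t := hsinpos t ⟨ht.1.le, ht.2⟩
      have hypos : 0 < x * Real.sin t := mul_pos hxpos hstpos
      have hst : Real.sin θ₀ ≤ Real.sin t := by
        apply Real.strictMonoOn_sin.monotoneOn ⟨by linarith, hθ₀le⟩
          ⟨by linarith [ht.1], ht.2⟩ ht.1.le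
      have hyT : T ≤ x * Real.sin t := by
        rw [hsinθ₀] at hst
        calc T = x * (T/x) := by field_simp
          _ ≤ x * Real.sin t := mul_le_mul_of_nonneg_left hst hxpos.le
      have hfest := hTbig (x * Real.sin t) hyT
      have : f (x * Real.sin t) - a * (1/(x*Real.sin t))
          = ((x * Real.sin t) * f (x * Real.sin t) - a) / (x * Real.sin t) := by
        field_simp
      rw [this, Real.norm_eq_abs, abs_div, abs_of_pos hypos]
      rw [div_le_iff₀ hypos]
      calc |x * Real.sin t * f (x * Real.sin t) - a| ≤ ε := hfest.le
        _ = ε * (1/(x * Real.sin t)) * (x * Real.sin t) := by field_simp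
    have h := intervalIntegral.norm_integral_le_of_norm_le
      (g := fun θ => ε * (1/(x*Real.sin θ)))
      (μ := volume) (f := fun θ => f (x * Real.sin θ) - a * (1/(x*Real.sin θ)))
      (a := θ₀) (b := Real.pi/2)
      hθ₀le (.of_forall fun t ht => hb t (by rwa [Set.uIoc_of_le hθ₀le])) hεint
    rw [intervalIntegral.integral_const_mul, hJ] at h
    exact h
  have hdiff : (∫ θ in θ₀..(Real.pi/2),
      (f (x * Real.sin θ) - a * (1/(x*Real.sin θ))))
      = (∫ θ in θ₀..(Real.pi/2), f (x * Real.sin θ)) - a * (S/x) := by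
    rw [intervalIntegral.integral_sub hint2 haint,
      intervalIntegral.integral_const_mul, hJ]
  -- assemble
  set I₁ := ∫ θ in (0:ℝ)..θ₀, f (x * Real.sin θ) with hI₁def
  clear_value I₁
  set I₂ := ∫ θ in θ₀..(Real.pi/2), f (x * Real.sin θ) with hI₂def
  clear_value I₂
  have hsplit : (∫ θ in (0:ℝ)..(Real.pi/2), f (x * Real.sin θ)) = I₁ + I₂ := by
    rw [hI₁def, hI₂def]
    exact (intervalIntegral.integral_add_adjacent_intervals hint1 hint2).symm
  rw [Real.dist_eq, hsplit]
  have hdecomp : x / L * (I₁ + I₂) - a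
      = x / L * I₁ + a * (S - L) / L + x / L * (I₂ - a * (S/x)) := by
    field_simp
    ring
  rw [hdecomp]
  have hb1 : |x / L * I₁| ≤ C * (Real.pi/2) * T / L := by
    rw [abs_mul, abs_of_pos (div_pos hxpos hL0)]
    calc x / L * |I₁| ≤ x / L * (C * (Real.pi/2 * (T/x))) := by
          apply mul_le_mul_of_nonneg_left _ (div_pos hxpos hL0).le
          calc |I₁| ≤ C * θ₀ := hI₁
            _ ≤ C * (Real.pi/2 * (T/x)) := mul_le_mul_of_nonneg_left hθ₀bound hC0
      _ = C * (Real.pi/2) * T / L := by field_simp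
  have hb2 : |a * (S - L) / L| ≤ |a| * D₁ / L := by
    rw [abs_div, abs_mul, abs_of_pos hL0]
    gcongr
  have hb3 : |x / L * (I₂ - a * (S/x))| ≤ ε * S / L := by
    rw [abs_mul, abs_of_pos (div_pos hxpos hL0)]
    have : |I₂ - a * (S/x)| ≤ ε * (S/x) := by
      have h' := hE
      rw [hdiff] at h'
      exact h'
    calc x / L * |I₂ - a * (S/x)| ≤ x / L * (ε * (S/x)) := by
          apply mul_le_mul_of_nonneg_left this (div_pos hxpos hL0).le
      _ = ε * S / L := by field_simp
  have htri : |x / L * I₁ + a * (S - L) / L + x / L * (I₂ - a * (S/x))|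
      ≤ C * (Real.pi/2) * T / L + |a| * D₁ / L + ε * S / L := by
    calc _ ≤ |x / L * I₁ + a * (S - L) / L| + |x / L * (I₂ - a * (S/x))| := abs_add_le _ _
      _ ≤ |x / L * I₁| + |a * (S - L) / L| + |x / L * (I₂ - a * (S/x))| := by
          linarith [abs_add_le (x / L * I₁) (a * (S - L) / L)]
      _ ≤ _ := by linarith
  refine lt_of_le_of_lt htri ?_
  -- final arithmetic
  have hSle : S ≤ L + D₁ := by linarith [abs_le.mp hSL |>.2]
  have h2ε : ε * S / L ≤ 2 * ε := by
    rw [div_le_iff₀ hL0]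
    have h1 : ε * S ≤ ε * (L + D₁) := mul_le_mul_of_nonneg_left hSle hε.le
    have h2 : ε * (L + D₁) ≤ ε * (2*L) :=
      mul_le_mul_of_nonneg_left (by linarith only [hLD₁]) hε.le
    calc ε * S ≤ ε * (2*L) := le_trans h1 h2
      _ = 2 * ε * L := by ring
  have hDL : C * (Real.pi/2) * T / L + |a| * D₁ / L < ε' / 2 := by
    rw [← add_div, div_lt_iff₀ hL0, ← hDdef]
    calc D < D + 1 := by linarith only []
      _ ≤ L * ε' / 2 := by linarith only [hLε]
      _ = ε' / 2 * L := by ring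
  have heq2 : (2:ℝ) * ε = ε' / 2 := by rw [hεdef]; ring
  linarith only [hDL, h2ε, heq2]
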